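/- Uniqueness for Axiomatization I: if Ψ¹ and Ψ² are allocation rules on variable network games (with Ψ_i(v,ρ) = 0 for players isolated in the extent g(ρ)) that both satisfy component balance and the equal bargaining power property, then Ψ¹(v,ρ) = Ψ²(v,ρ) for every component additive network game v and every network formation probability distribution ρ. -/

import Mathlib

open scoped Classical BigOperators

noncomputable section

/-- A link is an unordered pair of two distinct players. -/
abbrev Link (N : Type) [DecidableEq N] := {e : Sym2 N // ¬ e.IsDiag}

/-- A network is a set of links. -/
abbrev Network (N : Type) [Fintype N] [DecidableEq N] := Finset (Link N)

variable {N : Type} [Fintype N] [DecidableEq N]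

/-- The link between two distinct players. -/
def mkLink (i j : N) (h : i ≠ j) : Link N :=
  ⟨s(i, j), by simp only [Sym2.mk_isDiag_iff]; exact h⟩

/-- ρ is a network formation probability distribution. -/
def IsDist (ρ : Network N → ℝ) : Prop :=
  (∀ g, 0 ≤ ρ g) ∧ ∑ g : Network N, ρ g = 1

/-- Restriction of a network formation probability distribution to a network `g`. -/
def restrictDist (ρ : Network N → ℝ) (g : Network N) : Network N → ℝ :=
  fun h => if h ⊆ g then ∑ h' ∈ gᶜ.powerset, ρ (h ∪ h') else 0

/-- The links of player `i` in network `g`. -/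
def playerLinks (i : N) (g : Network N) : Network N :=
  g.filter (fun e => i ∈ (e : Sym2 N))

/-- ρ^{-ij} : removal of the link `e` from the distribution ρ. -/
def linkRemove (ρ : Network N → ℝ) (e : Link N) : Network N → ℝ :=
  restrictDist ρ {e}ᶜ

/-- ρ^{-i} : removal of the player `i` from the distribution ρ. -/
def playerRemove (ρ : Network N → ℝ) (i : N) : Network N → ℝ :=
  restrictDist ρ (playerLinks i Finset.univ)ᶜ

/-- The extent g(ρ) of ρ : the union of all networks with positive probability. -/
def extent (ρ : Network N → ℝ) : Network N :=
  Finset.univ.filter (fun e => ∃ g : Network N, 0 < ρ g ∧ e ∈ g)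

/-- The set N(g) of non-isolated players of a network. -/
def players (g : Network N) : Finset N :=
  Finset.univ.filter (fun i => ∃ e ∈ g, i ∈ (e : Sym2 N))

/-- The simple graph associated with a network. -/
def toGraph (g : Network N) : SimpleGraph N where
  Adj i j := ∃ e ∈ g, (e : Sym2 N) = s(i, j)
  symm := by
    constructor
    rintro i j ⟨e, he, h2⟩
    exact ⟨e, he, by rw [h2, Sym2.eq_swap]⟩
  loopless := by
    constructor
    rintro i ⟨e, he, h2⟩
    exact e.2 (by rw [h2]; exact Sym2.mk_isDiag_iff.mpr rfl)

/-- Two links lie in the same component of `g`. -/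
def sameComp (g : Network N) (e e' : Link N) : Prop :=
  ∃ i ∈ (e : Sym2 N), ∃ j ∈ (e' : Sym2 N), (toGraph g).Reachable i j

/-- The component of `g` containing the link `e`. -/
def linkComponent (g : Network N) (e : Link N) : Network N :=
  g.filter (fun e' => sameComp g e e')

/-- The set C(g) of components of the network `g`. -/
def components (g : Network N) : Finset (Network N) :=
  g.image (linkComponent g)

/-- A network game `v` is component additive. -/
def CompAdditive (v : Network N → ℝ) : Prop :=
  ∀ g : Network N, v g = ∑ h ∈ components g, v h

/-- Expected wealth 𝔼(v,ρ) of a variable network game. -/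
def expWealth (v ρ : Network N → ℝ) : ℝ :=
  ∑ g : Network N, ρ g * v g

/-- The Shapley value of a cooperative game. -/
def shapley (ω : Finset N → ℝ) (i : N) : ℝ :=
  ∑ S ∈ (Finset.univ.erase i).powerset,
    ((S.card.factorial * (Fintype.card N - S.card - 1).factorial : ℝ) /
      (Fintype.card N).factorial) * (ω (insert i S) - ω S)

/-- The restriction g|S of a network to the coalition S. -/
def netRestrict (g : Network N) (S : Finset N) : Network N :=
  g.filter (fun e => ∀ j ∈ (e : Sym2 N), j ∈ S)

/-- The Myerson Value of a network game. -/
def myerson (v : Network N → ℝ) (g : Network N) (i : N) : ℝ :=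
  shapley (fun S => v (netRestrict g S)) i

/-- The Expected Myerson Value of a variable network game. -/
def expectedMyerson (v ρ : Network N → ℝ) (i : N) : ℝ :=
  ∑ g : Network N, ρ g * myerson v g i

/-- The cooperative game ω_{(v,ρ)} associated with a variable network game. -/
def coopGame (v ρ : Network N → ℝ) (S : Finset N) : ℝ :=
  ∑ g : Network N, ρ g * v (netRestrict g S)

lemma union_inter_eq {g p1 p2 : Network N} (h1 : p1 ⊆ g) (h2 : p2 ⊆ gᶜ) :
    (p1 ∪ p2) ∩ g = p1 := by
  ext a
  simp only [Finset.mem_inter, Finset.mem_union]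
  constructor
  · rintro ⟨h | h, hg⟩
    · exact h
    · exact absurd hg (by simpa [Finset.mem_compl] using h2 h)
  · intro ha; exact ⟨Or.inl ha, h1 ha⟩

lemma union_sdiff_eq {g p1 p2 : Network N} (h1 : p1 ⊆ g) (h2 : p2 ⊆ gᶜ) :
    (p1 ∪ p2) \ g = p2 := by
  ext a
  simp only [Finset.mem_sdiff, Finset.mem_union]
  constructor
  · rintro ⟨h | h, hg⟩
    · exact absurd (h1 h) hg
    · exact h
  · intro ha
    exact ⟨Or.inr ha, by simpa [Finset.mem_compl] using h2 ha⟩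

lemma sum_union_split (g : Network N) (f : Network N → ℝ) :
    ∑ h ∈ g.powerset, ∑ h' ∈ gᶜ.powerset, f (h ∪ h') = ∑ k : Network N, f k := by
  rw [← Finset.sum_product']
  refine Finset.sum_nbij' (fun p => p.1 ∪ p.2) (fun k => (k ∩ g, k \ g)) ?_ ?_ ?_ ?_ ?_
  · intro p _; exact Finset.mem_univ _
  · intro k _
    simp only [Finset.mem_product, Finset.mem_powerset]
    refine ⟨Finset.inter_subset_right, ?_⟩
    intro x hx; simp only [Finset.mem_compl]
    exact (Finset.mem_sdiff.mp hx).2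
  · rintro ⟨p1, p2⟩ hp
    simp only [Finset.mem_product, Finset.mem_powerset] at hp
    simp [union_inter_eq hp.1 hp.2, union_sdiff_eq hp.1 hp.2]
  · intro k _
    simp only
    ext a
    simp only [Finset.mem_union, Finset.mem_inter, Finset.mem_sdiff]
    tauto
  · intro p _; rfl

lemma restrict_eq_of_subset {ρ : Network N → ℝ} {g h : Network N} (hh : h ⊆ g) :
    restrictDist ρ g h = ∑ h' ∈ gᶜ.powerset, ρ (h ∪ h') := if_pos hh

lemma isDist_restrict {ρ : Network N → ℝ} (hρ : IsDist ρ) (g : Network N) :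
    IsDist (restrictDist ρ g) := by
  constructor
  · intro h
    unfold restrictDist
    split
    · exact Finset.sum_nonneg fun h' _ => hρ.1 _
    · exact le_refl 0
  · have : ∑ h : Network N, restrictDist ρ g h
        = ∑ h ∈ Finset.univ.filter (fun h : Network N => h ⊆ g),
            ∑ h' ∈ gᶜ.powerset, ρ (h ∪ h') := by
      rw [Finset.sum_filter]
      rfl
    rw [this]
    have hpw : Finset.univ.filter (fun h : Network N => h ⊆ g) = g.powerset := by
      ext x; simp [Finset.mem_powerset]
    rw [hpw, sum_union_split]
    exact hρ.2

lemma mem_extent_iff {ρ : Network N → ℝ} {e : Link N} :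
    e ∈ extent ρ ↔ ∃ g : Network N, 0 < ρ g ∧ e ∈ g := by
  simp [extent]

lemma extent_restrict {ρ : Network N → ℝ} (hρ : IsDist ρ) (g : Network N) :
    extent (restrictDist ρ g) = extent ρ ∩ g := by
  ext e
  simp only [mem_extent_iff, Finset.mem_inter]
  constructor
  · rintro ⟨h, hpos, heh⟩
    by_cases hhg : h ⊆ g
    · rw [restrict_eq_of_subset hhg] at hpos
      obtain ⟨h', _, hp⟩ := Finset.exists_lt_of_sum_lt (by
        simpa using hpos : ∑ h' ∈ gᶜ.powerset, (0:ℝ) < ∑ h' ∈ gᶜ.powerset, ρ (h ∪ h'))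
      exact ⟨⟨h ∪ h', hp, Finset.mem_union_left _ heh⟩, hhg heh⟩
    · rw [restrictDist, if_neg hhg] at hpos
      exact absurd hpos (lt_irrefl 0)
  · rintro ⟨⟨k, hpos, hek⟩, heg⟩
    refine ⟨k ∩ g, ?_, Finset.mem_inter.mpr ⟨hek, heg⟩⟩
    have hsub : k ∩ g ⊆ g := Finset.inter_subset_right
    rw [restrict_eq_of_subset hsub]
    have hmem : k \ g ∈ gᶜ.powerset := by
      simp only [Finset.mem_powerset]
      intro x hx; simp only [Finset.mem_compl]; exact (Finset.mem_sdiff.mp hx).2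
    have hkey : (k ∩ g) ∪ (k \ g) = k := by
      ext a; simp only [Finset.mem_union, Finset.mem_inter, Finset.mem_sdiff]; tauto
    calc (0:ℝ) < ρ k := hpos
      _ = ρ ((k ∩ g) ∪ (k \ g)) := by rw [hkey]
      _ ≤ ∑ h' ∈ gᶜ.powerset, ρ ((k ∩ g) ∪ h') :=
          Finset.single_le_sum (fun h' _ => hρ.1 _) hmem

lemma reach_mem_link {g : Network N} {z : Link N} (hz : z ∈ g) {x y : N}
    (hx : x ∈ (z : Sym2 N)) (hy : y ∈ (z : Sym2 N)) : (toGraph g).Reachable x y := by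
  by_cases hxy : x = y
  · subst hxy; rfl
  · exact SimpleGraph.Adj.reachable ⟨z, hz, (Sym2.mem_and_mem_iff hxy).mp ⟨hx, hy⟩⟩

lemma mem_players_iff {g : Network N} {i : N} :
    i ∈ players g ↔ ∃ e ∈ g, i ∈ (e : Sym2 N) := by simp [players]

lemma reach_of_players {g : Network N} {e : Link N} (he : e ∈ g) {a b : N}
    (ha : a ∈ players (linkComponent g e)) (hb : b ∈ players (linkComponent g e)) :
    (toGraph g).Reachable a b := by
  obtain ⟨e₁, he₁, hae₁⟩ := mem_players_iff.mp ha
  obtain ⟨e₂, he₂, hbe₂⟩ := mem_players_iff.mp hb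
  obtain ⟨he₁g, x, hxe, y, hye₁, hxy⟩ := Finset.mem_filter.mp he₁
  obtain ⟨he₂g, x', hx'e, y', hy'e₂, hx'y'⟩ := Finset.mem_filter.mp he₂
  exact ((reach_mem_link he₁g hae₁ hye₁).trans hxy.symm).trans
    (((reach_mem_link he hxe hx'e).trans hx'y').trans (reach_mem_link he₂g hy'e₂ hbe₂))

/-- uniqueness for Axiomatization I: two allocation rules on variable
network games satisfying component balance and equal bargaining power coincide on
component additive variable network games. -/
theorem uniqueness_axiomatizationI
    (Ψ₁ Ψ₂ : (Network N → ℝ) → (Network N → ℝ) → N → ℝ)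
    (h₁iso : ∀ (v ρ : Network N → ℝ), v ∅ = 0 → IsDist ρ →
      ∀ i : N, i ∉ players (extent ρ) → Ψ₁ v ρ i = 0)
    (h₂iso : ∀ (v ρ : Network N → ℝ), v ∅ = 0 → IsDist ρ →
      ∀ i : N, i ∉ players (extent ρ) → Ψ₂ v ρ i = 0)
    (h₁cb : ∀ (v ρ : Network N → ℝ), CompAdditive v → IsDist ρ →
      ∀ h ∈ components (extent ρ),
        ∑ i ∈ players h, Ψ₁ v ρ i = ∑ g : Network N, ρ g * v (g ∩ h))
    (h₂cb : ∀ (v ρ : Network N → ℝ), CompAdditive v → IsDist ρ →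
      ∀ h ∈ components (extent ρ),
        ∑ i ∈ players h, Ψ₂ v ρ i = ∑ g : Network N, ρ g * v (g ∩ h))
    (h₁ebp : ∀ (v ρ : Network N → ℝ), v ∅ = 0 → IsDist ρ →
      ∀ (i j : N) (hij : i ≠ j), mkLink i j hij ∈ extent ρ →
        Ψ₁ v ρ i - Ψ₁ v (linkRemove ρ (mkLink i j hij)) i =
          Ψ₁ v ρ j - Ψ₁ v (linkRemove ρ (mkLink i j hij)) j)
    (h₂ebp : ∀ (v ρ : Network N → ℝ), v ∅ = 0 → IsDist ρ →
      ∀ (i j : N) (hij : i ≠ j), mkLink i j hij ∈ extent ρ →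
        Ψ₂ v ρ i - Ψ₂ v (linkRemove ρ (mkLink i j hij)) i =
          Ψ₂ v ρ j - Ψ₂ v (linkRemove ρ (mkLink i j hij)) j)
    (v ρ : Network N → ℝ) (hv : CompAdditive v) (hv0 : v ∅ = 0) (hρ : IsDist ρ)
    (i : N) :
    Ψ₁ v ρ i = Ψ₂ v ρ i := by
  suffices H : ∀ n (ρ : Network N → ℝ), IsDist ρ → (extent ρ).card ≤ n →
      ∀ i, Ψ₁ v ρ i = Ψ₂ v ρ i from H (extent ρ).card ρ hρ le_rfl i
  intro n
  induction n with
  | zero =>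
    intro ρ hρd hcard i
    have he : extent ρ = ∅ := Finset.card_eq_zero.mp (Nat.le_zero.mp hcard)
    have hni : i ∉ players (extent ρ) := by simp [players, he]
    rw [h₁iso v ρ hv0 hρd i hni, h₂iso v ρ hv0 hρd i hni]
  | succ n ih =>
    intro ρ hρd hcard i
    by_cases hi : i ∈ players (extent ρ)
    · -- adjacency ⇒ equal differences
      have hconst : ∀ a b : N, (toGraph (extent ρ)).Adj a b →
          Ψ₁ v ρ a - Ψ₂ v ρ a = Ψ₁ v ρ b - Ψ₂ v ρ b := by
        rintro a b ⟨e, he, heq⟩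
        have hab : a ≠ b := by
          intro h; subst h
          exact e.2 (by rw [heq]; exact Sym2.mk_isDiag_iff.mpr rfl)
        have hee : mkLink a b hab = e := Subtype.ext heq.symm
        have hmem : mkLink a b hab ∈ extent ρ := hee ▸ he
        have h1 := h₁ebp v ρ hv0 hρd a b hab hmem
        have h2 := h₂ebp v ρ hv0 hρd a b hab hmem
        have hρ' : IsDist (linkRemove ρ (mkLink a b hab)) :=
          isDist_restrict hρd _
        have hext : extent (linkRemove ρ (mkLink a b hab))
            = (extent ρ).erase (mkLink a b hab) := by
          rw [linkRemove, extent_restrict hρd]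
          ext x
          simp only [Finset.mem_inter, Finset.mem_compl, Finset.mem_singleton,
            Finset.mem_erase]
          tauto
        have hcard' : (extent (linkRemove ρ (mkLink a b hab))).card ≤ n := by
          rw [hext, Finset.card_erase_of_mem hmem]
          omega
        have ihA := ih (linkRemove ρ (mkLink a b hab)) hρ' hcard' a
        have ihB := ih (linkRemove ρ (mkLink a b hab)) hρ' hcard' b
        linarith
      have hreach : ∀ a b : N, (toGraph (extent ρ)).Reachable a b →
          Ψ₁ v ρ a - Ψ₂ v ρ a = Ψ₁ v ρ b - Ψ₂ v ρ b := by
        intro a b hr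
        obtain ⟨w⟩ := hr
        induction w with
        | nil => rfl
        | cons h p ihw => exact (hconst _ _ h).trans ihw
      obtain ⟨e, he, hie⟩ := mem_players_iff.mp hi
      set h := linkComponent (extent ρ) e with hdef
      have hcomp : h ∈ components (extent ρ) := Finset.mem_image_of_mem _ he
      have heh : e ∈ h := Finset.mem_filter.mpr ⟨he, ⟨i, hie, i, hie, by rfl⟩⟩
      have hih : i ∈ players h := mem_players_iff.mpr ⟨e, heh, hie⟩
      have hconstp : ∀ j ∈ players h, Ψ₁ v ρ j - Ψ₂ v ρ j = Ψ₁ v ρ i - Ψ₂ v ρ i :=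
        fun j hj => hreach j i (reach_of_players he hj hih)
      have hsum : ∑ j ∈ players h, (Ψ₁ v ρ j - Ψ₂ v ρ j) = 0 := by
        rw [Finset.sum_sub_distrib, h₁cb v ρ hv hρd h hcomp,
          h₂cb v ρ hv hρd h hcomp, sub_self]
      rw [Finset.sum_congr rfl hconstp, Finset.sum_const] at hsum
      have hcardpos : 0 < (players h).card := Finset.card_pos.mpr ⟨i, hih⟩
      have : Ψ₁ v ρ i - Ψ₂ v ρ i = 0 := by
        rcases (by simpa [nsmul_eq_mul] using hsum :
            players h = ∅ ∨ Ψ₁ v ρ i - Ψ₂ v ρ i = 0) with h0 | h0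
        · exact absurd h0 (Finset.nonempty_iff_ne_empty.mp ⟨i, hih⟩)
        · exact h0
      linarith
    · rw [h₁iso v ρ hv0 hρd i hi, h₂iso v ρ hv0 hρd i hi]
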